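/- Let N ≥ 2 and let {φ_1,...,φ_{N-1}} be linearly independent unit-norm vectors in an N-dimensional real inner product space H, and let W_i = φ_i^⊥ = {x ∈ H : ⟨x, φ_i⟩ = 0} for i = 1,...,N-1. Then the family of subspaces {W_i}_{i=1}^{N-1} does not do norm retrieval. -/

import Mathlib

open scoped RealInnerProductSpace

noncomputable section

/-- A family of subspaces of a finite-dimensional real inner product space does
norm retrieval (via their orthogonal projections) if equality of the norms of all the
orthogonal projections of two vectors implies equality of the norms of the vectors. -/
def DoesNormRetrieval {H : Type*} [NormedAddCommGroup H] [InnerProductSpace ℝ H]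
    [FiniteDimensional ℝ H] {ι : Type*} (W : ι → Submodule ℝ H) : Prop :=
  ∀ x y : H, (∀ i : ι, ‖(W i).orthogonalProjection x‖ = ‖(W i).orthogonalProjection y‖) →
    ‖x‖ = ‖y‖

/-- If `{φ_i}_{i=1}^{N-1}` are linearly independent unit vectors in an `N`-dimensional
real inner product space (`N ≥ 2`), then the hyperplanes `{φ_i^⊥}_{i=1}^{N-1}` cannot do
norm retrieval. -/
theorem stmt_6 {H : Type*} [NormedAddCommGroup H] [InnerProductSpace ℝ H]
    [FiniteDimensional ℝ H] {N : ℕ} (hN : 2 ≤ N)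
    (hdim : Module.finrank ℝ H = N)
    (φ : Fin (N - 1) → H) (hind : LinearIndependent ℝ φ)
    (hnorm : ∀ i, ‖φ i‖ = 1) :
    ¬ DoesNormRetrieval (fun i : Fin (N - 1) => (ℝ ∙ φ i)ᗮ) := by
  intro hret
  set S : Submodule ℝ H := Submodule.span ℝ (Set.range φ) with hS
  -- a vector w with ⟪w, φ i⟫ = 1 for all i
  have hSfin : FiniteDimensional ℝ S := inferInstance
  set b : Module.Basis (Fin (N - 1)) ℝ S := Module.Basis.span hind with hb
  set f : S →ₗ[ℝ] ℝ := ∑ j, b.coord j with hf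
  set w' : S := (InnerProductSpace.toDual ℝ S).symm (LinearMap.toContinuousLinearMap f)
    with hw'
  set w : H := (w' : H) with hw
  have hw1 : ∀ i, ⟪w, φ i⟫ = 1 := by
    intro i
    have hmem : φ i ∈ S := Submodule.subset_span ⟨i, rfl⟩
    have h1 : ⟪w', (⟨φ i, hmem⟩ : S)⟫ = f ⟨φ i, hmem⟩ := by
      rw [hw']
      exact InnerProductSpace.toDual_symm_apply
    have hbi : (⟨φ i, hmem⟩ : S) = b i := by
      apply Subtype.ext
      exact congrArg Subtype.val (Module.Basis.span_apply hind i).symm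
    have h2 : f ⟨φ i, hmem⟩ = 1 := by
      rw [hbi, hf]
      simp only [LinearMap.coe_sum, Finset.sum_apply, Module.Basis.coord_apply, Module.Basis.repr_self]
      simp [Finsupp.single_apply]
    have := h1.trans h2
    rwa [Submodule.coe_inner] at this
  -- Cauchy–Schwarz: ‖w‖ ≥ 1
  have hNpos : 0 < N - 1 := by omega
  have hwnorm : 1 ≤ ‖w‖ := by
    have i0 : Fin (N - 1) := ⟨0, hNpos⟩
    have := real_inner_le_norm w (φ i0)
    rw [hw1 i0, hnorm i0, mul_one] at this
    exact this
  -- a unit vector z orthogonal to all φ i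
  have hSne : S ≠ ⊤ := by
    intro h
    have h1 : Module.finrank ℝ S = N - 1 := by
      rw [finrank_span_eq_card hind, Fintype.card_fin]
    have h2 : Module.finrank ℝ S = N := by rw [h, finrank_top, hdim]
    omega
  have hSorth : Sᗮ ≠ ⊥ := fun h => hSne (Submodule.orthogonal_eq_bot_iff.mp h)
  obtain ⟨z', hz'mem, hz'ne⟩ := Submodule.ne_bot_iff _ |>.mp hSorth
  set z : H := ‖z'‖⁻¹ • z' with hz
  have hznorm : ‖z‖ = 1 := by
    rw [hz, norm_smul, norm_inv, norm_norm, inv_mul_cancel₀ (norm_ne_zero_iff.mpr hz'ne)]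
  have hzorth : ∀ i, ⟪φ i, z⟫ = 0 := by
    intro i
    have hmem : φ i ∈ S := Submodule.subset_span ⟨i, rfl⟩
    have := hz'mem _ hmem
    rw [hz, real_inner_smul_right, this, mul_zero]
  -- the counterexample vectors
  set c : ℝ := Real.sqrt (‖w‖ ^ 2 - 1) with hc
  have hc0 : 0 ≤ c := Real.sqrt_nonneg _
  have hcsq : c ^ 2 = ‖w‖ ^ 2 - 1 := by
    rw [hc, Real.sq_sqrt]
    nlinarith
  set y : H := c • z with hy
  have hynorm : ‖y‖ = c := by
    rw [hy, norm_smul, hznorm, mul_one, Real.norm_eq_abs, abs_of_nonneg hc0]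
  -- projections of y
  have hymem : ∀ i, y ∈ (ℝ ∙ φ i)ᗮ := by
    intro i
    rw [Submodule.mem_orthogonal_singleton_iff_inner_right, hy, real_inner_smul_right,
      hzorth i, mul_zero]
  have hyproj : ∀ i : Fin (N - 1),
      ‖((ℝ ∙ φ i)ᗮ).orthogonalProjection y‖ = c := by
    intro i
    have hcoe : ‖((ℝ ∙ φ i)ᗮ).orthogonalProjection y‖
        = ‖(((ℝ ∙ φ i)ᗮ).orthogonalProjection y : H)‖ := rfl
    rw [hcoe, show (((ℝ ∙ φ i)ᗮ).orthogonalProjection y : H) = y from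
      Submodule.starProjection_eq_self_iff.mpr (hymem i), hynorm]
  clear_value w' w z c y
  -- projections of w
  have hwproj : ∀ i : Fin (N - 1),
      ‖((ℝ ∙ φ i)ᗮ).orthogonalProjection w‖ = c := by
    intro i
    have hmem : w - φ i ∈ (ℝ ∙ φ i)ᗮ := by
      rw [Submodule.mem_orthogonal_singleton_iff_inner_right, inner_sub_right,
        real_inner_comm, hw1 i, real_inner_self_eq_norm_sq, hnorm i]
      norm_num
    have heq : (((ℝ ∙ φ i)ᗮ).orthogonalProjection w : H) = w - φ i := by
      refine Submodule.eq_starProjection_of_mem_of_inner_eq_zero hmem ?_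
      intro u hu
      have h2 : w - (w - φ i) = φ i := by abel
      rw [h2]
      exact Submodule.mem_orthogonal_singleton_iff_inner_right.mp hu
    have hnormcoe : ‖((ℝ ∙ φ i)ᗮ).orthogonalProjection w‖ = ‖w - φ i‖ := by
      rw [← heq]; rfl
    have hsq : ‖w - φ i‖ ^ 2 = c ^ 2 := by
      rw [hcsq]
      have := norm_sub_sq_real w (φ i)
      rw [hw1 i, hnorm i] at this
      linarith
    rw [hnormcoe, ← Real.sqrt_sq (norm_nonneg (w - φ i)), hsq, Real.sqrt_sq hc0]
  -- contradiction
  have := hret w y (fun i => by rw [hwproj i, hyproj i])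
  rw [hynorm] at this
  nlinarith
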